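/- arXiv:0804.2075 — 2 statements merged into one kernel-verified Lean document; each statement's English description precedes it below -/
import Mathlib

section
/- Let $X$ be a Banach ideal space on a probability space $(\Omega,\mathscr F,\mathsf P)$ and let $C\subset X$ be a convex cone, closed in the norm topology, with $-X_+\subset C$. Suppose $B\in\mathscr F$, $(x_n)_{n\ge 1}$ is a sequence in $C$ with $\|x_n^-\|\le 1$ for all $n$, and $(\varepsilon_n)_{n\ge 1}$ is a sequence of positive reals with $\varepsilon_n\to 0$ such that $\varepsilon_n x_n\ge 1$ a.e. on $B$ for every $n$. Then the indicator function $I_B$ belongs to $X$ and $I_B\in C$. -/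
open MeasureTheory

/-- A *Banach ideal space* on a measure space `(α, μ)`: a solid linear subspace of
`L⁰(μ)` equipped with a complete monotone norm (the norm is given as a function on all
of `L⁰(μ)`; only its values on the carrier matter). -/
structure BanachIdealSpace (α : Type*) [MeasurableSpace α] (μ : Measure α) where
  carrier : Set (α →ₘ[μ] ℝ)
  zero_mem : 0 ∈ carrier
  add_mem : ∀ x ∈ carrier, ∀ y ∈ carrier, x + y ∈ carrier
  smul_mem : ∀ (c : ℝ), ∀ x ∈ carrier, c • x ∈ carrier
  solid : ∀ x ∈ carrier, ∀ y : α →ₘ[μ] ℝ, |y| ≤ |x| → y ∈ carrier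
  norm : (α →ₘ[μ] ℝ) → ℝ
  norm_nonneg : ∀ x ∈ carrier, 0 ≤ norm x
  norm_eq_zero_iff : ∀ x ∈ carrier, (norm x = 0 ↔ x = 0)
  norm_add_le : ∀ x ∈ carrier, ∀ y ∈ carrier, norm (x + y) ≤ norm x + norm y
  norm_smul : ∀ (c : ℝ), ∀ x ∈ carrier, norm (c • x) = |c| * norm x
  norm_mono : ∀ x ∈ carrier, ∀ y ∈ carrier, |x| ≤ |y| → norm x ≤ norm y
  complete : ∀ u : ℕ → (α →ₘ[μ] ℝ), (∀ n, u n ∈ carrier) →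
    (∀ ε : ℝ, 0 < ε → ∃ N, ∀ m ≥ N, ∀ n ≥ N, norm (u m - u n) < ε) →
    ∃ x ∈ carrier, ∀ ε : ℝ, 0 < ε → ∃ N, ∀ n ≥ N, norm (u n - x) < ε

/-- If `C` is a norm-closed convex cone in a Banach ideal space `X` with `-X₊ ⊆ C`, and
`(xₙ) ⊆ C` with `‖xₙ⁻‖ ≤ 1`, `εₙ > 0`, `εₙ → 0` are such that `εₙ xₙ ≥ 1` a.e. on `B`,
then the indicator `I_B` belongs to `X` and moreover `I_B ∈ C`. -/
theorem indicator_mem_cone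
    {Ω : Type*} [MeasurableSpace Ω] (P : Measure Ω) [IsProbabilityMeasure P]
    (X : BanachIdealSpace Ω P) (C : Set (Ω →ₘ[P] ℝ))
    (hC_sub : C ⊆ X.carrier)
    (hC_add : ∀ x ∈ C, ∀ y ∈ C, x + y ∈ C)
    (hC_smul : ∀ (c : ℝ), 0 ≤ c → ∀ x ∈ C, c • x ∈ C)
    (hC_closed : ∀ x ∈ X.carrier, (∀ ε : ℝ, 0 < ε → ∃ y ∈ C, X.norm (y - x) < ε) → x ∈ C)
    (hC_neg : ∀ x ∈ X.carrier, 0 ≤ x → -x ∈ C)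
    (B : Set Ω) (hB : MeasurableSet B)
    (x : ℕ → (Ω →ₘ[P] ℝ)) (hxC : ∀ n, x n ∈ C)
    (hxnorm : ∀ n, X.norm ((-(x n)) ⊔ 0) ≤ 1)
    (ε : ℕ → ℝ) (hε_pos : ∀ n, 0 < ε n)
    (hε_lim : Filter.Tendsto ε Filter.atTop (nhds 0))
    (hεx : ∀ n, ∀ᵐ ω ∂P, ω ∈ B → 1 ≤ ε n * (x n) ω) :
    (AEEqFun.mk (B.indicator (fun _ => (1 : ℝ)))
        ((measurable_const.indicator hB).aestronglyMeasurable) : Ω →ₘ[P] ℝ) ∈ X.carrier ∧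
    (AEEqFun.mk (B.indicator (fun _ => (1 : ℝ)))
        ((measurable_const.indicator hB).aestronglyMeasurable) : Ω →ₘ[P] ℝ) ∈ C := by
  set I : Ω →ₘ[P] ℝ := AEEqFun.mk (B.indicator (fun _ => (1 : ℝ)))
      ((measurable_const.indicator hB).aestronglyMeasurable) with hIdef
  have hIcoe : ⇑I =ᵐ[P] B.indicator (fun _ => (1 : ℝ)) := AEEqFun.coeFn_mk _ _
  have hxX : ∀ n, x n ∈ X.carrier := fun n => hC_sub (hxC n)
  set y : ℕ → (Ω →ₘ[P] ℝ) := fun n => ε n • x n with hydef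
  have hyX : ∀ n, y n ∈ X.carrier := fun n => X.smul_mem _ _ (hxX n)
  have hycoe : ∀ n, ⇑(y n) =ᵐ[P] fun ω => ε n * (x n) ω := by
    intro n
    filter_upwards [AEEqFun.coeFn_smul (ε n) (x n)] with ω h
    simpa [smul_eq_mul] using h
  -- negative parts
  set v : ℕ → (Ω →ₘ[P] ℝ) := fun n => (-(x n)) ⊔ 0 with hvdef
  have hvcoe : ∀ n, ⇑(v n) =ᵐ[P] fun ω => max (-(x n ω)) 0 := by
    intro n
    filter_upwards [AEEqFun.coeFn_sup (-(x n)) (0 : Ω →ₘ[P] ℝ),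
      AEEqFun.coeFn_neg (x n), AEEqFun.coeFn_zero (β := ℝ) (μ := P)] with ω h1 h2 h3
    rw [h1, h2, h3]; simp [max_def]
  have hvX : ∀ n, v n ∈ X.carrier := by
    intro n
    refine X.solid _ (hxX n) _ ?_
    rw [← AEEqFun.coeFn_le]
    filter_upwards [hvcoe n, AEEqFun.coeFn_abs (v n), AEEqFun.coeFn_abs (x n)] with ω h1 h2 h3
    rw [h2, h3, h1]
    rcases le_total (x n ω) 0 with h | h
    · rw [sup_eq_left.mpr (neg_nonneg.2 h), abs_of_nonneg (neg_nonneg.2 h), abs_of_nonpos h]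
    · rw [sup_eq_right.mpr (neg_nonpos.2 h), abs_zero]; exact abs_nonneg _
  -- w n = ε n • v n, with norm ≤ ε n
  set w : ℕ → (Ω →ₘ[P] ℝ) := fun n => ε n • v n with hwdef
  have hwX : ∀ n, w n ∈ X.carrier := fun n => X.smul_mem _ _ (hvX n)
  have hwcoe : ∀ n, ⇑(w n) =ᵐ[P] fun ω => ε n * max (-(x n ω)) 0 := by
    intro n
    filter_upwards [AEEqFun.coeFn_smul (ε n) (v n), hvcoe n] with ω h1 h2
    rw [h1]; simp [smul_eq_mul, h2]
  have hwnorm : ∀ n, X.norm (w n) ≤ ε n :=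
    fun n =>
      calc X.norm (ε n • v n) = |ε n| * X.norm (v n) := X.norm_smul (ε n) (v n) (hvX n)
        _ = ε n * X.norm (v n) := by rw [abs_of_pos (hε_pos n)]
        _ ≤ ε n * 1 := mul_le_mul_of_nonneg_left (hxnorm n) (hε_pos n).le
        _ = ε n := mul_one _
  -- I ∈ X
  have habsI : |I| ≤ |y 0| := by
    rw [← AEEqFun.coeFn_le]
    filter_upwards [hεx 0, hIcoe, AEEqFun.coeFn_abs I, AEEqFun.coeFn_abs (y 0), hycoe 0]
      with ω h1 h2 h3 h4 h5
    rw [h3, h4, h2, h5]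
    by_cases hω : ω ∈ B
    · rw [Set.indicator_of_mem hω]
      calc |(1:ℝ)| = 1 := abs_one
        _ ≤ ε 0 * x 0 ω := h1 hω
        _ ≤ |ε 0 * x 0 ω| := le_abs_self _
    · rw [Set.indicator_of_notMem hω, abs_zero]; exact abs_nonneg _
  have hIX : I ∈ X.carrier := X.solid _ (hyX 0) _ habsI
  refine ⟨hIX, ?_⟩
  -- z n = (I - y n) ⊔ 0
  set z : ℕ → (Ω →ₘ[P] ℝ) := fun n => (I - y n) ⊔ 0 with hzdef
  have hzcoe : ∀ n, ⇑(z n) =ᵐ[P] fun ω => max (I ω - y n ω) 0 := by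
    intro n
    filter_upwards [AEEqFun.coeFn_sup (I - y n) (0 : Ω →ₘ[P] ℝ),
      AEEqFun.coeFn_sub I (y n), AEEqFun.coeFn_zero (β := ℝ) (μ := P)] with ω h1 h2 h3
    rw [h1, h2, h3]; simp
  -- |z n| ≤ |w n|
  have hzw : ∀ n, |z n| ≤ |w n| := by
    intro n
    rw [← AEEqFun.coeFn_le]
    filter_upwards [hεx n, hzcoe n, hwcoe n, AEEqFun.coeFn_abs (z n),
      AEEqFun.coeFn_abs (w n), hIcoe, hycoe n] with ω h1 h2 h3 h4 h5 h6 h7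
    rw [h4, h5, h2, h3]
    have hv0 : (0:ℝ) ≤ max (-(x n ω)) 0 := le_max_right _ _
    have hw0 : (0:ℝ) ≤ ε n * max (-(x n ω)) 0 := mul_nonneg (hε_pos n).le hv0
    rw [abs_of_nonneg hw0, h6, h7]
    by_cases hω : ω ∈ B
    · rw [Set.indicator_of_mem hω]
      have : (1:ℝ) - ε n * x n ω ≤ 0 := by linarith [h1 hω]
      rw [max_eq_right this, abs_zero]; exact hw0
    · rw [Set.indicator_of_notMem hω, zero_sub]
      have hmm : max (-(ε n * x n ω)) 0 = ε n * max (-(x n ω)) 0 := by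
        rcases le_total (x n ω) 0 with h | h
        · rw [max_eq_left (neg_nonneg.2 h), max_eq_left
            (neg_nonneg.2 (mul_nonpos_of_nonneg_of_nonpos (hε_pos n).le h)), mul_neg]
        · rw [max_eq_right (neg_nonpos.2 h), max_eq_right
            (neg_nonpos.2 (mul_nonneg (hε_pos n).le h)), mul_zero]
      rw [hmm, abs_of_nonneg hw0]
  have hzX : ∀ n, z n ∈ X.carrier := fun n => X.solid _ (hwX n) _ (hzw n)
  -- c n = y n - (y n - I) ⊔ 0 ∈ C
  set c : ℕ → (Ω →ₘ[P] ℝ) := fun n => y n + -((y n - I) ⊔ 0) with hcdef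
  have hsX : ∀ n, (y n - I) ⊔ 0 ∈ X.carrier := by
    intro n
    have hsub : y n - I ∈ X.carrier := by
      have he : y n - I = y n + (-1 : ℝ) • I := by rw [neg_one_smul, sub_eq_add_neg]
      rw [he]
      exact X.add_mem _ (hyX n) _ (X.smul_mem _ _ hIX)
    refine X.solid _ hsub _ ?_
    rw [← AEEqFun.coeFn_le]
    filter_upwards [AEEqFun.coeFn_abs ((y n - I) ⊔ 0), AEEqFun.coeFn_abs (y n - I),
      AEEqFun.coeFn_sup (y n - I) (0 : Ω →ₘ[P] ℝ),
      AEEqFun.coeFn_zero (β := ℝ) (μ := P)] with ω h1 h2 h3 h4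
    rw [h1, h2, h3, h4]
    simp only [Pi.zero_apply]
    rcases le_total ((y n - I) ω) 0 with h | h
    · rw [max_eq_right h, abs_zero]; exact abs_nonneg _
    · rw [max_eq_left h]
  have hsnn : ∀ n, (0 : Ω →ₘ[P] ℝ) ≤ (y n - I) ⊔ 0 := fun n => le_sup_right
  have hcC : ∀ n, c n ∈ C := fun n =>
    hC_add _ (hC_smul (ε n) (hε_pos n).le _ (hxC n)) _ (hC_neg _ (hsX n) (hsnn n))
  -- c n - I = -(z n)
  have hkey : ∀ n, c n - I = -(z n) := by
    intro n
    apply AEEqFun.ext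
    filter_upwards [AEEqFun.coeFn_sub (c n) I, AEEqFun.coeFn_add (y n) (-((y n - I) ⊔ 0)),
      AEEqFun.coeFn_neg ((y n - I) ⊔ 0), AEEqFun.coeFn_sup (y n - I) (0 : Ω →ₘ[P] ℝ),
      AEEqFun.coeFn_sub (y n) I, AEEqFun.coeFn_neg (z n), hzcoe n,
      AEEqFun.coeFn_zero (β := ℝ) (μ := P)] with ω h1 h2 h3 h4 h5 h6 h7 h8
    rw [h1, Pi.sub_apply, h2, Pi.add_apply, h3, Pi.neg_apply, h4, h5,
      Pi.sub_apply, h8, Pi.zero_apply, h6, Pi.neg_apply, h7]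
    set a := y n ω
    set b := I ω
    show a + -(max (a - b) 0) - b = -(max (b - a) 0)
    rcases le_total a b with h | h
    · rw [max_eq_right (sub_nonpos.2 h), max_eq_left (sub_nonneg.2 h)]; ring
    · rw [max_eq_left (sub_nonneg.2 h), max_eq_right (sub_nonpos.2 h)]; ring
  -- conclude by closedness
  refine hC_closed I hIX ?_
  intro δ hδ
  obtain ⟨n, hn⟩ := (hε_lim.eventually (gt_mem_nhds hδ)).exists
  refine ⟨c n, hcC n, ?_⟩
  have habs : |c n - I| ≤ |w n| := by
    rw [hkey n, abs_neg]; exact hzw n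
  have hmem : c n - I ∈ X.carrier := X.solid _ (hwX n) _ habs
  calc X.norm (c n - I) ≤ X.norm (w n) := X.norm_mono _ hmem _ (hwX n) habs
    _ ≤ ε n := hwnorm n
    _ < δ := hn
end

section
/- Let $(\Omega,\mathscr F,\mathsf P)$ be a probability space, $G\subset L^0_+(\mathsf P)$ a set of non-negative measurable functions, and $G^1=\{y\in L^1_+(\mathsf P): y\le x\text{ a.e. for some }x\in G\}$. Suppose $A\in\mathscr F$ with $\mathsf P(A)>0$ and that $c\,I_A$ belongs to the $L^1(\mathsf P)$-closure of $G^1-L^1_+(\mathsf P)$ for every $c>0$. Then for every $\varepsilon>0$ there exists $z\in G$ such that $\mathsf P(A\cap\{z<1/\varepsilon\})<\varepsilon$. -/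
open MeasureTheory

/-- Let `(Ω, ℱ, P)` be a probability space, `G` a set of non-negative measurable functions,
and `G¹ = {y ∈ L¹₊(P) : y ≤ x a.e. for some x ∈ G}`. If `A` has positive probability and
`c·I_A` lies in the `L¹`-closure of `G¹ - L¹₊(P)` for every `c > 0`, then for every `ε > 0`
there exists `z ∈ G` with `P(A ∩ {z < 1/ε}) < ε`. -/
theorem exists_large_elt_of_indicator_mem_closure
    {Ω : Type*} [MeasurableSpace Ω] (P : Measure Ω) [IsProbabilityMeasure P]
    (G : Set (Ω → ℝ))
    (hG_meas : ∀ z ∈ G, Measurable z)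
    (hG_nonneg : ∀ z ∈ G, ∀ᵐ ω ∂P, 0 ≤ z ω)
    (A : Set Ω) (hA_meas : MeasurableSet A) (hA_pos : 0 < P A)
    (h_closure : ∀ c : ℝ, 0 < c → ∀ δ : ℝ, 0 < δ →
      ∃ y : Ω → ℝ,
        (Integrable y P ∧ (∀ᵐ ω ∂P, 0 ≤ y ω) ∧ ∃ x ∈ G, ∀ᵐ ω ∂P, y ω ≤ x ω) ∧
      ∃ w : Ω → ℝ, Integrable w P ∧ (∀ᵐ ω ∂P, 0 ≤ w ω) ∧
        ∫ ω, |y ω - w ω - c * A.indicator (fun _ => (1 : ℝ)) ω| ∂P < δ) :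
    ∀ ε : ℝ, 0 < ε → ∃ z ∈ G, (P (A ∩ {ω | z ω < 1 / ε})).toReal < ε := by
  intro ε hε
  have hεinv : (0 : ℝ) < 1 / ε := by positivity
  obtain ⟨y, ⟨hy_int, hy_nonneg, x, hxG, hyx⟩, w, hw_int, hw_nonneg, hI⟩ :=
    h_closure (1 / ε + 1) (by linarith) ε hε
  refine ⟨x, hxG, ?_⟩
  set c : ℝ := 1 / ε + 1
  set S : Set Ω := A ∩ {ω | x ω < 1 / ε} with hS
  have hS_meas : MeasurableSet S :=
    hA_meas.inter ((hG_meas x hxG) measurableSet_Iio)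
  -- integrability of the absolute difference
  have h_int : Integrable (fun ω => |y ω - w ω - c * A.indicator (fun _ => (1:ℝ)) ω|) P := by
    apply Integrable.abs
    exact (hy_int.sub hw_int).sub
      (((integrable_indicator_iff hA_meas).mpr ((integrableOn_const_iff (C := (1:ℝ))).mpr
        (Or.inr (measure_lt_top P A)))).const_mul c)
  -- pointwise a.e. bound : indicator of S ≤ the abs difference
  have h_ae : ∀ᵐ ω ∂P, S.indicator (fun _ => (1:ℝ)) ω ≤
      |y ω - w ω - c * A.indicator (fun _ => (1:ℝ)) ω| := by
    filter_upwards [hyx, hw_nonneg] with ω h1 h2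
    by_cases hωS : ω ∈ S
    · have hωA : ω ∈ A := hωS.1
      have hx : x ω < 1 / ε := hωS.2
      simp only [Set.indicator_of_mem hωS, Set.indicator_of_mem hωA]
      have : y ω - w ω - c * 1 ≤ -1 := by
        have := h1.trans_lt hx
        simp only [c]; linarith
      calc (1:ℝ) ≤ -(y ω - w ω - c * 1) := by linarith
        _ ≤ |y ω - w ω - c * 1| := neg_le_abs _
    · simp only [Set.indicator_of_notMem hωS]
      positivity
  have h1 : (P S).toReal ≤ ∫ ω, |y ω - w ω - c * A.indicator (fun _ => (1:ℝ)) ω| ∂P := by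
    have := integral_mono_ae ((integrable_indicator_iff hS_meas).mpr
      ((integrableOn_const_iff (C := (1:ℝ))).mpr (Or.inr (measure_lt_top P S)))) h_int h_ae
    rwa [integral_indicator_const (1:ℝ) hS_meas, smul_eq_mul, mul_one] at this
  exact h1.trans_lt hI
end
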